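/- Let P ≥ 1 be an integer and β > 0 a real number such that A_p(β) ≤ 0 for all integers 1 ≤ p ≤ P and ∑_{p=1}^{P} (−A_p(β)) ≤ 4. Then for every real D̂ with 0 ≤ D̂ ≤ 1, every complex number ρ satisfying the characteristic equation ρ² − 2ρ + 1 = ρ · ∑_{p=1}^{P} A_p(β) D̂^p has modulus |ρ| ≤ 1. -/

import Mathlib

/-- The coefficients of the order-2P multiderivative wave scheme:
`A p β = 2 ∑_{m=1}^{p} (−1)^m (β^{2m}/(2m)!) · C(p−1, m−1)`. -/
noncomputable def A (p : ℕ) (β : ℝ) : ℝ :=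
  2 * ∑ m ∈ Finset.Icc 1 p,
    (-1 : ℝ) ^ m * β ^ (2 * m) / (Nat.factorial (2 * m)) * ((p - 1).choose (m - 1))

theorem stmt_2 (P : ℕ) (hP : 1 ≤ P) (β : ℝ) (hβ : 0 < β)
    (hneg : ∀ p : ℕ, 1 ≤ p → p ≤ P → A p β ≤ 0)
    (hsum : ∑ p ∈ Finset.Icc 1 P, (-(A p β)) ≤ 4) :
    ∀ D : ℝ, 0 ≤ D → D ≤ 1 →
      ∀ ρ : ℂ, ρ ^ 2 - 2 * ρ + 1 = ρ * ∑ p ∈ Finset.Icc 1 P, (A p β : ℂ) * (D : ℂ) ^ p →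
        ‖ρ‖ ≤ 1 := by
  intro D hD0 hD1 ρ hρ
  set S : ℝ := ∑ p ∈ Finset.Icc 1 P, A p β * D ^ p with hS
  have hcast : (∑ p ∈ Finset.Icc 1 P, (A p β : ℂ) * (D : ℂ) ^ p) = (S : ℂ) := by
    rw [hS]; push_cast; ring
  rw [hcast] at hρ
  have hS0 : S ≤ 0 := by
    apply Finset.sum_nonpos
    intro p hp
    obtain ⟨h1, h2⟩ := Finset.mem_Icc.mp hp
    exact mul_nonpos_of_nonpos_of_nonneg (hneg p h1 h2) (pow_nonneg hD0 p)
  have hS4 : -4 ≤ S := by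
    have h1 : ∑ p ∈ Finset.Icc 1 P, (-(A p β * D ^ p)) ≤ ∑ p ∈ Finset.Icc 1 P, (-(A p β)) := by
      apply Finset.sum_le_sum
      intro p hp
      obtain ⟨ha, hb⟩ := Finset.mem_Icc.mp hp
      have hA : 0 ≤ -(A p β) := by linarith [hneg p ha hb]
      calc -(A p β * D ^ p) = (-(A p β)) * D ^ p := by ring
        _ ≤ (-(A p β)) * 1 := by
            exact mul_le_mul_of_nonneg_left (pow_le_one₀ hD0 hD1) hA
        _ = -(A p β) := by ring
    have h2 : -S = ∑ p ∈ Finset.Icc 1 P, (-(A p β * D ^ p)) := by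
      rw [hS, ← Finset.sum_neg_distrib]
    linarith
  set x := ρ.re with hx
  set y := ρ.im with hy
  set c : ℝ := 2 + S with hc
  have hre : x ^ 2 - y ^ 2 = c * x - 1 := by
    have := congrArg Complex.re hρ
    simp [Complex.add_re, Complex.sub_re, Complex.mul_re, pow_two, Complex.ofReal_re,
      Complex.ofReal_im] at this
    rw [hc]; nlinarith [this]
  have him : 2 * x * y = c * y := by
    have := congrArg Complex.im hρ
    simp [Complex.add_im, Complex.sub_im, Complex.mul_im, pow_two, Complex.ofReal_re,
      Complex.ofReal_im] at this
    rw [hc]; nlinarith [this]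
  have hc2 : -2 ≤ c ∧ c ≤ 2 := by constructor <;> simp [hc] <;> linarith
  have key : x ^ 2 + y ^ 2 ≤ 1 := by
    rcases eq_or_ne y 0 with h0 | h0
    · rw [h0] at hre ⊢
      have : x ^ 2 + 1 = c * x := by nlinarith [hre]
      have hsq : (x ^ 2 + 1) ^ 2 = (c * x) ^ 2 := by rw [this]
      have hpos : 0 ≤ (2 - c) * (c + 2) * x ^ 2 :=
        mul_nonneg (mul_nonneg (by linarith [hc2.2]) (by linarith [hc2.1])) (sq_nonneg x)
      nlinarith [hsq, hpos, sq_nonneg (x ^ 2 - 1)]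
    · have hcx : c = 2 * x := by
        have := him
        field_simp at this
        rcases mul_eq_zero.mp (by nlinarith [this] : (2 * x - c) * y = 0) with h | h
        · linarith
        · exact absurd h h0
      nlinarith [hre, hcx]
  have h2 : ‖ρ‖ ^ 2 ≤ 1 := by
    rw [Complex.sq_norm, Complex.normSq_apply]
    nlinarith [key]
  nlinarith [norm_nonneg ρ, h2]
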